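/- Normalize A = (0, 0) and B = (1, 0), let C, D ∈ ℝ² make A, B, C, D pairwise distinct, and let k_A, k_B, k_C, k_D be nonzero reals. Let (X, Y) be a real solution of System (*) with Y = (y₁, y₂), and for T ∈ {A, B} set Γ̄_T = ‖Y−T‖²/(k_T‖Y−T‖² − 1). Then k_AΓ̄_A − 1 ≠ 0 and k_BΓ̄_B − 1 ≠ 0, and y₁ = (1/2)·[Γ̄_A(k_BΓ̄_B − 1) − Γ̄_B(k_AΓ̄_A − 1) + (k_AΓ̄_A − 1)(k_BΓ̄_B − 1)] / [(k_AΓ̄_A − 1)(k_BΓ̄_B − 1)]. -/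

import Mathlib

/-- The squared Euclidean "norm" on `ℝ²`: sum of squares of the coordinates. -/
def sq2 (u : ℝ × ℝ) : ℝ := u.1 ^ 2 + u.2 ^ 2

/-- `(X, Y) ∈ ℝ² × ℝ²` is a real solution of System (*) for the configuration
`A, B, C, D` with constants `kA, kB, kC, kD`. -/
def IsRealSol (A B C D : ℝ × ℝ) (kA kB kC kD : ℝ) (X Y : ℝ × ℝ) : Prop :=
  (X ≠ A ∧ X ≠ B ∧ X ≠ C ∧ X ≠ D) ∧
  (Y ≠ A ∧ Y ≠ B ∧ Y ≠ C ∧ Y ≠ D) ∧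
  1 / sq2 (X - A) + 1 / sq2 (Y - A) = kA ∧
  1 / sq2 (X - B) + 1 / sq2 (Y - B) = kB ∧
  1 / sq2 (X - C) + 1 / sq2 (Y - C) = kC ∧
  1 / sq2 (X - D) + 1 / sq2 (Y - D) = kD

/-- `Γ̄_T(Y) = ‖Y−T‖²/(k_T‖Y−T‖² − 1)`. -/
noncomputable def GammaBar (k : ℝ) (T Y : ℝ × ℝ) : ℝ :=
  sq2 (Y - T) / (k * sq2 (Y - T) - 1)

lemma sq2_ne (u : ℝ × ℝ) (h : u ≠ 0) : sq2 u ≠ 0 := by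
  have h1 : u.1 ≠ 0 ∨ u.2 ≠ 0 := by
    by_contra hc
    push_neg at hc
    exact h (Prod.ext hc.1 hc.2)
  rcases h1 with h1 | h1 <;>
  · have : 0 < sq2 u := by unfold sq2; positivity
    linarith

theorem first_coordinate_formula
    (C D : ℝ × ℝ) (kA kB kC kD : ℝ)
    (A B : ℝ × ℝ) (hA : A = ((0 : ℝ), (0 : ℝ))) (hB : B = ((1 : ℝ), (0 : ℝ)))
    (hAB : A ≠ B) (hAC : A ≠ C) (hAD : A ≠ D)
    (hBC : B ≠ C) (hBD : B ≠ D) (hCD : C ≠ D)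
    (hkA : kA ≠ 0) (hkB : kB ≠ 0) (hkC : kC ≠ 0) (hkD : kD ≠ 0)
    (X Y : ℝ × ℝ) (y1 y2 : ℝ) (hY : Y = (y1, y2))
    (hsol : IsRealSol A B C D kA kB kC kD X Y) :
    kA * GammaBar kA A Y - 1 ≠ 0 ∧ kB * GammaBar kB B Y - 1 ≠ 0 ∧
    y1 = (1 / 2) *
      (GammaBar kA A Y * (kB * GammaBar kB B Y - 1)
        - GammaBar kB B Y * (kA * GammaBar kA A Y - 1)
        + (kA * GammaBar kA A Y - 1) * (kB * GammaBar kB B Y - 1)) /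
      ((kA * GammaBar kA A Y - 1) * (kB * GammaBar kB B Y - 1)) := by
  obtain ⟨⟨hXA, hXB, -, -⟩, ⟨hYA, hYB, -, -⟩, eA, eB, -, -⟩ := hsol
  subst hA hB hY
  set xa := sq2 (X - ((0:ℝ), (0:ℝ))) with hxa
  set xb := sq2 (X - ((1:ℝ), (0:ℝ))) with hxb
  set ya := sq2 ((y1, y2) - ((0:ℝ), (0:ℝ))) with hya
  set yb := sq2 ((y1, y2) - ((1:ℝ), (0:ℝ))) with hyb
  have hxa0 : xa ≠ 0 := sq2_ne _ (sub_ne_zero.mpr hXA)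
  have hxb0 : xb ≠ 0 := sq2_ne _ (sub_ne_zero.mpr hXB)
  have hya0 : ya ≠ 0 := sq2_ne _ (sub_ne_zero.mpr hYA)
  have hyb0 : yb ≠ 0 := sq2_ne _ (sub_ne_zero.mpr hYB)
  have hA1 : kA * ya - 1 = ya / xa := by
    field_simp at eA ⊢
    linarith
  have hB1 : kB * yb - 1 = yb / xb := by
    field_simp at eB ⊢
    linarith
  have hA1' : kA * ya - 1 ≠ 0 := by rw [hA1]; exact div_ne_zero hya0 hxa0
  have hB1' : kB * yb - 1 ≠ 0 := by rw [hB1]; exact div_ne_zero hyb0 hxb0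
  have hGA : GammaBar kA ((0:ℝ), (0:ℝ)) (y1, y2) = xa := by
    rw [GammaBar, ← hya, hA1]
    field_simp
  have hGB : GammaBar kB ((1:ℝ), (0:ℝ)) (y1, y2) = xb := by
    rw [GammaBar, ← hyb, hB1]
    field_simp
  have hkGA : kA * xa - 1 = xa / ya := by
    have := hA1
    field_simp at this ⊢
    nlinarith [this]
  have hkGB : kB * xb - 1 = xb / yb := by
    have := hB1
    field_simp at this ⊢
    nlinarith [this]
  rw [hGA, hGB, hkGA, hkGB]
  refine ⟨div_ne_zero hxa0 hya0, div_ne_zero hxb0 hyb0, ?_⟩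
  have hab : ya - yb = 2 * y1 - 1 := by
    simp only [hya, hyb, sq2, Prod.fst_sub, Prod.snd_sub]
    ring
  field_simp
  linear_combination (-1 : ℝ) * hab
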